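/- For the misaligned correlator with any offset T_off ∈ [0, T_c) and the alternating training sequence with an even number of chips per ambient symbol, the undesired ambient component vanishes: (1/(N_c T_c)) ∫_0^{N_c T_c} s(t)·c(t - T_off) dt = 0, where c is extended by the same alternating pattern before time 0. -/

import Mathlib

open MeasureTheory intervalIntegral Set

theorem stmt_14 (T_c T_off : ℝ) (hTc : 0 < T_c) (hoff : T_off ∈ Set.Ico 0 T_c)
    (m N_s : ℕ) (hm : 1 ≤ m) (hNs : 0 < N_s) (N_c : ℕ) (hNc : N_c = 2 * m * N_s)
    (sv : ℕ → ℂ) :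
    (1 / ((N_c : ℂ) * (T_c : ℂ))) * ∫ t in (0:ℝ)..((N_c : ℝ) * T_c),
        sv (⌊t / (2 * m * T_c)⌋.toNat)
          * ((((-1 : ℝ) ^ (⌊(t - T_off) / T_c⌋)) : ℝ) : ℂ) = 0 := by
  obtain ⟨hoff0, hoffT⟩ := hoff
  set g : ℝ → ℂ := fun t => ((((-1 : ℝ) ^ (⌊(t - T_off) / T_c⌋)) : ℝ) : ℂ) with hgdef
  -- measurability of g
  have hmg : Measurable g := by
    have h1 : Measurable fun t : ℝ => ⌊(t - T_off) / T_c⌋ :=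
      ((measurable_id.sub_const T_off).div_const T_c).floor
    exact (measurable_from_top
      (f := fun k : ℤ => ((((-1 : ℝ) ^ k : ℝ)) : ℂ))).comp h1
  -- interval integrability of g
  have hintg : ∀ a b : ℝ, IntervalIntegrable g volume a b := by
    intro a b
    rw [intervalIntegrable_iff]
    haveI : IsFiniteMeasure (volume.restrict (Set.uIoc a b)) := by
      constructor
      rw [Measure.restrict_apply_univ, Set.uIoc]
      simp [Real.volume_Ioc]
    refine Integrable.mono' (integrable_const 1) hmg.aestronglyMeasurable ?_
    filter_upwards with t
    rcases Int.even_or_odd ⌊(t - T_off) / T_c⌋ with h | h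
    · simp [hgdef, h.neg_one_zpow]
    · simp [hgdef, h.neg_one_zpow]
  -- periodicity of g
  have hper : Function.Periodic g (2 * T_c) := by
    intro t
    have h2 : (t + 2 * T_c - T_off) / T_c = (t - T_off) / T_c + ((2 : ℤ) : ℝ) := by
      field_simp
      ring
    simp only [hgdef, h2, Int.floor_add_intCast]
    have : (-1 : ℝ) ^ (⌊(t - T_off) / T_c⌋ + 2) = (-1 : ℝ) ^ ⌊(t - T_off) / T_c⌋ := by
      rw [zpow_add₀ (by norm_num : (-1 : ℝ) ≠ 0)]
      norm_num
    rw [this]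
  -- value of the integral over an interval where g is constant
  have hpiece : ∀ (a : ℝ) (c : ℂ), (∀ t ∈ Set.Ioo a (a + T_c), g t = c) →
      ∫ t in a..(a + T_c), g t = T_c * c := by
    intro a c h
    rw [intervalIntegral.integral_of_le (by linarith), MeasureTheory.integral_Ioc_eq_integral_Ioo,
      MeasureTheory.setIntegral_congr_fun measurableSet_Ioo h, MeasureTheory.setIntegral_const]
    simp [Real.volume_Ioo, ENNReal.toReal_ofReal hTc.le, Complex.real_smul, hTc.le]
  -- integral over one period vanishes
  have hone : ∫ t in (0:ℝ)..(2 * T_c), g t = 0 := by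
    have h0 : ∫ t in (0:ℝ)..(2 * T_c), g t = ∫ t in T_off..(T_off + 2 * T_c), g t := by
      have := hper.intervalIntegral_add_eq 0 T_off
      simpa using this
    have hsplit : (∫ t in T_off..(T_off + T_c), g t)
        + ∫ t in (T_off + T_c)..(T_off + 2 * T_c), g t
        = ∫ t in T_off..(T_off + 2 * T_c), g t :=
      intervalIntegral.integral_add_adjacent_intervals (hintg _ _) (hintg _ _)
    have h1 : ∫ t in T_off..(T_off + T_c), g t = T_c * 1 := by
      apply hpiece
      intro t ht
      obtain ⟨ht1, ht2⟩ := ht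
      have hfl : ⌊(t - T_off) / T_c⌋ = 0 := by
        rw [Int.floor_eq_iff]
        push_cast
        constructor
        · exact div_nonneg (by linarith) hTc.le
        · rw [div_lt_iff₀ hTc]
          push_cast
          linarith
      simp [hgdef, hfl]
    have h2 : ∫ t in (T_off + T_c)..(T_off + T_c + T_c), g t = T_c * (-1) := by
      apply hpiece
      intro t ht
      obtain ⟨ht1, ht2⟩ := ht
      have hfl : ⌊(t - T_off) / T_c⌋ = 1 := by
        rw [Int.floor_eq_iff]
        push_cast
        constructor
        · rw [le_div_iff₀ hTc]
          push_cast
          linarith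
        · rw [div_lt_iff₀ hTc]
          push_cast
          linarith
      simp [hgdef, hfl]
    have h2' : ∫ t in (T_off + T_c)..(T_off + 2 * T_c), g t = T_c * (-1) := by
      rw [show T_off + 2 * T_c = T_off + T_c + T_c by ring]
      exact h2
    rw [h0, ← hsplit, h1, h2']
    ring
  -- integral over any interval of length m * (2 * T_c) vanishes
  have hm0 : ∀ a : ℝ, ∫ t in a..(a + (m : ℝ) * (2 * T_c)), g t = 0 := by
    intro a
    have hz := hper.intervalIntegral_add_zsmul_eq (m : ℤ) a hintg
    have hper2 : ∫ x in a..(a + 2 * T_c), g x = 0 := by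
      have := hper.intervalIntegral_add_eq a 0
      simpa [hone] using this
    rw [hper2, smul_zero] at hz
    rw [show (m : ℝ) * (2 * T_c) = (((m : ℤ) : ℝ)) * (2 * T_c) by push_cast; ring,
      ← zsmul_eq_mul]
    exact hz
  -- notation for symbol period
  set P : ℝ := 2 * (m : ℝ) * T_c with hPdef
  have hP : 0 < P := by
    have hm' : (1 : ℝ) ≤ (m : ℝ) := by exact_mod_cast hm
    have : (0:ℝ) < (m:ℝ) := by linarith
    positivity
  set f : ℝ → ℂ := fun t => sv (⌊t / P⌋.toNat) * g t with hfdef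
  -- on each symbol interval, f coincides with a constant times g (on the open interval)
  have heqon : ∀ k : ℕ, Set.EqOn (fun t => sv k * g t) f
      (Set.Ioo ((k : ℝ) * P) (((k : ℝ) + 1) * P)) := by
    intro k t ht
    obtain ⟨ht1, ht2⟩ := ht
    have hfl : ⌊t / P⌋ = (k : ℤ) := by
      rw [Int.floor_eq_iff]
      push_cast
      constructor
      · rw [le_div_iff₀ hP]
        push_cast
        linarith
      · rw [div_lt_iff₀ hP]
        push_cast
        linarith
    simp [hfdef, hfl]
  -- integrability of f on each symbol interval
  have hintf : ∀ k : ℕ, IntervalIntegrable f volume ((k : ℝ) * P) (((k : ℝ) + 1) * P) := by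
    intro k
    have hle : (k : ℝ) * P ≤ ((k : ℝ) + 1) * P := by nlinarith
    rw [intervalIntegrable_iff, Set.uIoc_of_le hle,
      integrableOn_Ioc_iff_integrableOn_Ioo]
    have hbase : IntegrableOn (fun t => sv k * g t)
        (Set.Ioo ((k : ℝ) * P) (((k : ℝ) + 1) * P)) volume := by
      have := (hintg ((k : ℝ) * P) (((k : ℝ) + 1) * P))
      rw [intervalIntegrable_iff, Set.uIoc_of_le hle,
        integrableOn_Ioc_iff_integrableOn_Ioo] at this
      exact this.const_mul _
    exact hbase.congr_fun (heqon k) measurableSet_Ioo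
  -- the integral of f over each symbol interval vanishes
  have hzero : ∀ k : ℕ, ∫ t in ((k : ℝ) * P)..(((k : ℝ) + 1) * P), f t = 0 := by
    intro k
    have hle : (k : ℝ) * P ≤ ((k : ℝ) + 1) * P := by nlinarith
    have h1 : ∫ t in ((k : ℝ) * P)..(((k : ℝ) + 1) * P), f t
        = ∫ t in ((k : ℝ) * P)..(((k : ℝ) + 1) * P), sv k * g t := by
      rw [intervalIntegral.integral_of_le hle, intervalIntegral.integral_of_le hle,
        MeasureTheory.integral_Ioc_eq_integral_Ioo, MeasureTheory.integral_Ioc_eq_integral_Ioo]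
      exact (MeasureTheory.setIntegral_congr_fun measurableSet_Ioo (heqon k)).symm
    rw [h1, intervalIntegral.integral_const_mul]
    have h2 : ((k : ℝ) + 1) * P = (k : ℝ) * P + (m : ℝ) * (2 * T_c) := by
      rw [hPdef]; ring
    rw [h2, hm0]
    ring
  -- sum up over the symbols
  have hsum := intervalIntegral.sum_integral_adjacent_intervals
      (f := f) (μ := volume) (a := fun k : ℕ => (k : ℝ) * P) (n := N_s)
      (fun k _ => by push_cast; exact hintf k)
  have htot : ∫ t in (0:ℝ)..((N_s : ℝ) * P), f t = 0 := by
    simp only [Nat.cast_zero, zero_mul] at hsum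
    rw [← hsum]
    apply Finset.sum_eq_zero
    intro k _
    push_cast
    exact hzero k
  have hNcT : (N_c : ℝ) * T_c = (N_s : ℝ) * P := by
    rw [hNc, hPdef]
    push_cast
    ring
  have hfg : (∫ t in (0:ℝ)..((N_c : ℝ) * T_c),
      sv (⌊t / (2 * m * T_c)⌋.toNat)
        * ((((-1 : ℝ) ^ (⌊(t - T_off) / T_c⌋)) : ℝ) : ℂ)) = ∫ t in (0:ℝ)..((N_s : ℝ) * P), f t := by
    rw [hNcT]
  rw [hfg, htot, mul_zero]
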